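/- Let A_1, …, A_n ∈ ℝ^d with n ≥ 1, and let σ(t) = 1/(1 + e^{−t}), w(t) = σ(t)(1 − σ(t)). For β ∈ ℝ^d define the logistic Hessian matrix H_β = (1/n) ∑_{i=1}^n w(⟨A_i, β⟩) A_i A_iᵀ. Then for all β, β′ ∈ ℝ^d, ‖H_β − H_{β′}‖ ≤ ( max_{1≤i≤n} ‖A_i‖₂³ / (6√3) ) · ‖β − β′‖₂, where ‖·‖ on matrices is the operator norm induced by the Euclidean norm. (Lemma 5.3, Lipschitz continuity of the logistic Hessian.) -/

import Mathlib

open Matrix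

/-- Operator norm of a square real matrix induced by the Euclidean norm. -/
noncomputable def matOpNorm {d : ℕ} (A : Matrix (Fin d) (Fin d) ℝ) : ℝ :=
  ‖Matrix.toEuclideanCLM (𝕜 := ℝ) A‖

/-- Euclidean norm of a vector in ℝ^d. -/
noncomputable def vnorm {d : ℕ} (v : Fin d → ℝ) : ℝ :=
  Real.sqrt (∑ i, (v i) ^ 2)

/-- Frobenius norm of a square real matrix. -/
noncomputable def frobNorm {d : ℕ} (A : Matrix (Fin d) (Fin d) ℝ) : ℝ :=
  Real.sqrt (∑ i, ∑ j, (A i j) ^ 2)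

/-- The positive semidefinite square root of a positive semidefinite matrix
(Mathlib's former `Matrix.PosSemidef.sqrt`, spelled out with its old definition). -/
noncomputable def posSemidefSqrt {d : ℕ} {M : Matrix (Fin d) (Fin d) ℝ} (hA : M.PosSemidef) :
    Matrix (Fin d) (Fin d) ℝ :=
  hA.1.eigenvectorUnitary.1 * diagonal ((↑) ∘ (√·) ∘ hA.1.eigenvalues) *
  (star hA.1.eigenvectorUnitary : Matrix (Fin d) (Fin d) ℝ)

/-- Inverse of the (unique symmetric positive definite) square root of a
positive definite matrix: `M^{-1/2}`. -/
noncomputable def pdInvSqrt {d : ℕ} {M : Matrix (Fin d) (Fin d) ℝ} (hM : M.PosDef) :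
    Matrix (Fin d) (Fin d) ℝ :=
  (posSemidefSqrt hM.posSemidef)⁻¹

/-- Smallest eigenvalue of a real symmetric matrix, via the Rayleigh quotient
(infimum of `vᵀ A v` over Euclidean-unit vectors `v`). -/
noncomputable def lamMin {d : ℕ} (A : Matrix (Fin d) (Fin d) ℝ) : ℝ :=
  ⨅ v : {v : Fin d → ℝ // ∑ i, (v i) ^ 2 = 1}, dotProduct v.1 (A *ᵥ v.1)

/-- Largest eigenvalue of a real symmetric matrix, via the Rayleigh quotient
(supremum of `vᵀ A v` over Euclidean-unit vectors `v`). -/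
noncomputable def lamMax {d : ℕ} (A : Matrix (Fin d) (Fin d) ℝ) : ℝ :=
  ⨆ v : {v : Fin d → ℝ // ∑ i, (v i) ^ 2 = 1}, dotProduct v.1 (A *ᵥ v.1)

/-- Loewner order on real symmetric matrices: `A ⪯ B` iff `B - A` is positive
semidefinite. -/
def loewnerLE {d : ℕ} (A B : Matrix (Fin d) (Fin d) ℝ) : Prop :=
  (B - A).PosSemidef

noncomputable def wAux (t : ℝ) : ℝ := (1/(1+Real.exp (-t))) * (1 - 1/(1+Real.exp (-t)))

lemma cube_bound (s : ℝ) (h0 : 0 ≤ s) (h1 : s ≤ 1) :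
    |s*(1-s)*(1-2*s)| ≤ 1/(6*Real.sqrt 3) := by
  have h3 : Real.sqrt 3 ^ 2 = 3 := Real.sq_sqrt (by norm_num)
  have hc : (0:ℝ) < 6*Real.sqrt 3 := by positivity
  have hq : 0 ≤ 1/12 + s - s^2 := by nlinarith [mul_nonneg h0 (sub_nonneg.2 h1)]
  have hx2 : (s*(1-s)*(1-2*s))^2 ≤ (1/(6*Real.sqrt 3))^2 := by
    have : (1/(6*Real.sqrt 3))^2 = 1/108 := by
      rw [div_pow, mul_pow, h3]; norm_num
    rw [this]
    nlinarith [mul_nonneg (sq_nonneg (s^2 - s + 1/6)) hq]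
  calc |s*(1-s)*(1-2*s)| = Real.sqrt ((s*(1-s)*(1-2*s))^2) := (Real.sqrt_sq_eq_abs _).symm
    _ ≤ Real.sqrt ((1/(6*Real.sqrt 3))^2) := Real.sqrt_le_sqrt hx2
    _ = 1/(6*Real.sqrt 3) := Real.sqrt_sq (by positivity)

lemma wAux_hasDerivAt (t : ℝ) :
    HasDerivAt wAux
      ((1/(1+Real.exp (-t))) * (1 - 1/(1+Real.exp (-t))) * (1 - 2*(1/(1+Real.exp (-t))))) t := by
  have hpos : (0:ℝ) < 1 + Real.exp (-t) := by positivity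
  have h1 : HasDerivAt (fun t : ℝ => 1 + Real.exp (-t)) (-Real.exp (-t)) t := by
    simpa using ((Real.hasDerivAt_exp (-t)).comp t (hasDerivAt_neg t)).const_add 1
  have hσ : HasDerivAt (fun t : ℝ => 1/(1+Real.exp (-t)))
      (Real.exp (-t)/(1+Real.exp (-t))^2) t := by
    have := h1.inv (ne_of_gt hpos)
    simpa [one_div, neg_div, div_eq_mul_inv, Pi.inv_def] using this
  have hw : HasDerivAt (fun t : ℝ => (1/(1+Real.exp (-t))) * (1 - 1/(1+Real.exp (-t))))
      ((Real.exp (-t)/(1+Real.exp (-t))^2) * (1 - 1/(1+Real.exp (-t)))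
        + (1/(1+Real.exp (-t))) * (-(Real.exp (-t)/(1+Real.exp (-t))^2))) t := by
    simpa [one_div, Pi.mul_def, Pi.sub_def] using hσ.mul ((hasDerivAt_const t (1:ℝ)).sub hσ)
  unfold wAux
  convert hw using 1
  have hE : Real.exp (-t)/(1+Real.exp (-t))^2
      = (1/(1+Real.exp (-t))) * (1 - 1/(1+Real.exp (-t))) := by
    field_simp; ring
  rw [← hE]; ring

lemma wAux_lip (s t : ℝ) : |wAux s - wAux t| ≤ (1/(6*Real.sqrt 3)) * |s - t| := by
  have := Convex.norm_image_sub_le_of_norm_hasDerivWithin_le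
    (f := wAux)
    (f' := fun t => (1/(1+Real.exp (-t))) * (1 - 1/(1+Real.exp (-t))) * (1 - 2*(1/(1+Real.exp (-t)))))
    (C := 1/(6*Real.sqrt 3)) (s := Set.univ)
    (fun x _ => (wAux_hasDerivAt x).hasDerivWithinAt)
    (fun x _ => by
      have hpos : (0:ℝ) < 1 + Real.exp (-x) := by positivity
      have h0 : 0 ≤ 1/(1+Real.exp (-x)) := by positivity
      have h1 : 1/(1+Real.exp (-x)) ≤ 1 := by
        rw [div_le_one hpos]; nlinarith [Real.exp_pos (-x)]
      simpa only [Real.norm_eq_abs, mul_assoc] using cube_bound _ h0 h1)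
    convex_univ (Set.mem_univ t) (Set.mem_univ s)
  simpa [Real.norm_eq_abs] using this

lemma vnorm_eq_norm {d : ℕ} (v : Fin d → ℝ) :
    vnorm v = ‖(WithLp.equiv 2 (Fin d → ℝ)).symm v‖ := by
  rw [EuclideanSpace.norm_eq]
  simp [vnorm, sq_abs]

lemma vnorm_nonneg {d : ℕ} (v : Fin d → ℝ) : 0 ≤ vnorm v := Real.sqrt_nonneg _

lemma dot_abs_le {d : ℕ} (v u : Fin d → ℝ) : |v ⬝ᵥ u| ≤ vnorm v * vnorm u := by
  have h : v ⬝ᵥ u = (inner ℝ ((WithLp.equiv 2 (Fin d → ℝ)).symm v)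
      ((WithLp.equiv 2 (Fin d → ℝ)).symm u) : ℝ) := by
    simp [PiLp.inner_apply, dotProduct, mul_comm]
  rw [h, vnorm_eq_norm, vnorm_eq_norm]
  exact abs_real_inner_le_norm _ _

lemma outer_opnorm {d : ℕ} (v : Fin d → ℝ) :
    ‖Matrix.toEuclideanCLM (𝕜 := ℝ) (vecMulVec v v)‖ ≤ vnorm v ^ 2 := by
  have h0 : 0 ≤ vnorm v := vnorm_nonneg v
  apply ContinuousLinearMap.opNorm_le_bound _ (by positivity)
  intro x
  have hx : x = (WithLp.equiv 2 (Fin d → ℝ)).symm (WithLp.equiv 2 (Fin d → ℝ) x) := rfl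
  rw [hx]
  change ‖(WithLp.equiv 2 (Fin d → ℝ)).symm (Matrix.toLin' (vecMulVec v v) (WithLp.equiv 2 (Fin d → ℝ) x))‖ ≤ _
  set u := WithLp.equiv 2 (Fin d → ℝ) x with hu
  have hmv : Matrix.toLin' (vecMulVec v v) u = (v ⬝ᵥ u) • v := by
    ext j
    simp only [Matrix.toLin'_apply, Matrix.mulVec, vecMulVec, dotProduct, Pi.smul_apply,
      smul_eq_mul, Matrix.of_apply, Finset.sum_mul]
    exact Finset.sum_congr rfl fun i _ => by ring
  rw [hmv]
  have hsmul : (WithLp.equiv 2 (Fin d → ℝ)).symm ((v ⬝ᵥ u) • v)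
      = (v ⬝ᵥ u) • (WithLp.equiv 2 (Fin d → ℝ)).symm v := rfl
  rw [hsmul, norm_smul, ← vnorm_eq_norm]
  have hxu : ‖(WithLp.equiv 2 (Fin d → ℝ)).symm u‖ = ‖x‖ := rfl
  calc ‖(v ⬝ᵥ u : ℝ)‖ * vnorm v = |v ⬝ᵥ u| * vnorm v := rfl
    _ ≤ (vnorm v * vnorm u) * vnorm v := by
        have := dot_abs_le v u
        nlinarith [abs_nonneg (v ⬝ᵥ u)]
    _ = vnorm v ^ 2 * ‖x‖ := by rw [vnorm_eq_norm u, hxu]; ring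

set_option maxHeartbeats 1000000 in
set_option synthInstance.maxHeartbeats 400000 in
/-- Lemma 5.3, Lipschitz continuity of the logistic Hessian:
`‖H_β − H_{β'}‖ ≤ (max_i ‖A_i‖₂³/(6√3))·‖β − β'‖₂`. -/
theorem stmt12 {n d : ℕ} (hn : 1 ≤ n) (A : Fin n → Fin d → ℝ) :
    let σ : ℝ → ℝ := fun t => 1 / (1 + Real.exp (-t))
    let w : ℝ → ℝ := fun t => σ t * (1 - σ t)
    let H : (Fin d → ℝ) → Matrix (Fin d) (Fin d) ℝ := fun β =>
      (1 / (n : ℝ)) • ∑ i, w (A i ⬝ᵥ β) • Matrix.vecMulVec (A i) (A i)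
    ∀ β β' : Fin d → ℝ,
      matOpNorm (H β - H β') ≤
        ((Finset.univ.sup'
            (Finset.univ_nonempty_iff.mpr (Fin.pos_iff_nonempty.mp hn))
            fun i => vnorm (A i) ^ 3) / (6 * Real.sqrt 3)) * vnorm (β - β') := by
  intro σ w H β β'
  classical
  have hKpos : (0:ℝ) < 6 * Real.sqrt 3 := by positivity
  have hK0 : (0:ℝ) ≤ 1/(6*Real.sqrt 3) := by positivity
  set M : ℝ := Finset.univ.sup'
    (Finset.univ_nonempty_iff.mpr (Fin.pos_iff_nonempty.mp hn))
    (fun i => vnorm (A i) ^ 3) with hMdef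
  have hM0 : 0 ≤ M := by
    have i : Fin n := ⟨0, by omega⟩
    refine le_trans (pow_nonneg (vnorm_nonneg (A i)) 3) ?_
    rw [hMdef]
    exact Finset.le_sup' (fun i => vnorm (A i) ^ 3) (Finset.mem_univ i)
  have hvΔ : 0 ≤ vnorm (β - β') := vnorm_nonneg _
  -- decompose the difference
  have hdiff : H β - H β'
      = (1/(n:ℝ)) • ∑ i, (w (A i ⬝ᵥ β) - w (A i ⬝ᵥ β')) • Matrix.vecMulVec (A i) (A i) := by
    simp only [H]
    rw [← smul_sub, ← Finset.sum_sub_distrib]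
    simp_rw [← sub_smul]
  rw [hdiff]
  unfold matOpNorm
  rw [_root_.map_smul, map_sum]
  simp_rw [_root_.map_smul]
  refine le_trans (ContinuousLinearMap.opNorm_smul_le _ _) ?_
  have hterm : ∀ i : Fin n,
      ‖(w (A i ⬝ᵥ β) - w (A i ⬝ᵥ β')) •
        Matrix.toEuclideanCLM (𝕜 := ℝ) (Matrix.vecMulVec (A i) (A i))‖
      ≤ (M / (6 * Real.sqrt 3)) * vnorm (β - β') := by
    intro i
    refine le_trans (ContinuousLinearMap.opNorm_smul_le _ _) ?_
    have hwlip : |w (A i ⬝ᵥ β) - w (A i ⬝ᵥ β')|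
        ≤ (1/(6*Real.sqrt 3)) * (vnorm (A i) * vnorm (β - β')) := by
      have h1 : |wAux (A i ⬝ᵥ β) - wAux (A i ⬝ᵥ β')|
          ≤ (1/(6*Real.sqrt 3)) * |A i ⬝ᵥ β - A i ⬝ᵥ β'| := wAux_lip _ _
      have h2 : A i ⬝ᵥ β - A i ⬝ᵥ β' = A i ⬝ᵥ (β - β') := by
        simp [dotProduct, Finset.mul_sum, mul_sub, Finset.sum_sub_distrib]
      have h3 := dot_abs_le (A i) (β - β')
      calc |w (A i ⬝ᵥ β) - w (A i ⬝ᵥ β')|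
          = |wAux (A i ⬝ᵥ β) - wAux (A i ⬝ᵥ β')| := rfl
        _ ≤ (1/(6*Real.sqrt 3)) * |A i ⬝ᵥ β - A i ⬝ᵥ β'| := h1
        _ = (1/(6*Real.sqrt 3)) * |A i ⬝ᵥ (β - β')| := by rw [h2]
        _ ≤ (1/(6*Real.sqrt 3)) * (vnorm (A i) * vnorm (β - β')) :=
            mul_le_mul_of_nonneg_left h3 hK0
    have hout := outer_opnorm (A i)
    have hcube : vnorm (A i) ^ 3 ≤ M := by
      rw [hMdef]; exact Finset.le_sup' (fun i => vnorm (A i) ^ 3) (Finset.mem_univ i)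
    have hvA : 0 ≤ vnorm (A i) := vnorm_nonneg _
    calc ‖w (A i ⬝ᵥ β) - w (A i ⬝ᵥ β')‖ *
          ‖Matrix.toEuclideanCLM (𝕜 := ℝ) (Matrix.vecMulVec (A i) (A i))‖
        ≤ ((1/(6*Real.sqrt 3)) * (vnorm (A i) * vnorm (β - β'))) * (vnorm (A i) ^ 2) := by
          apply mul_le_mul hwlip hout (norm_nonneg _) (by positivity)
      _ = (1/(6*Real.sqrt 3)) * (vnorm (A i) ^ 3) * vnorm (β - β') := by ring
      _ ≤ (1/(6*Real.sqrt 3)) * M * vnorm (β - β') :=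
          mul_le_mul_of_nonneg_right (mul_le_mul_of_nonneg_left hcube hK0) hvΔ
      _ = (M / (6 * Real.sqrt 3)) * vnorm (β - β') := by ring
  have hsum : ‖∑ i, (w (A i ⬝ᵥ β) - w (A i ⬝ᵥ β')) •
        Matrix.toEuclideanCLM (𝕜 := ℝ) (Matrix.vecMulVec (A i) (A i))‖
      ≤ (n:ℝ) * ((M / (6 * Real.sqrt 3)) * vnorm (β - β')) := by
    calc ‖∑ i, (w (A i ⬝ᵥ β) - w (A i ⬝ᵥ β')) •
          Matrix.toEuclideanCLM (𝕜 := ℝ) (Matrix.vecMulVec (A i) (A i))‖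
        ≤ ∑ i : Fin n, ((M / (6 * Real.sqrt 3)) * vnorm (β - β')) :=
          norm_sum_le_of_le _ (fun i _ => hterm i)
      _ = (n:ℝ) * ((M / (6 * Real.sqrt 3)) * vnorm (β - β')) := by
          simp [Finset.sum_const, mul_comm]
  have hn' : (0:ℝ) < (n:ℝ) := by exact_mod_cast Nat.pos_of_ne_zero (by omega)
  calc ‖(1/(n:ℝ))‖ * ‖∑ i, (w (A i ⬝ᵥ β) - w (A i ⬝ᵥ β')) •
          Matrix.toEuclideanCLM (𝕜 := ℝ) (Matrix.vecMulVec (A i) (A i))‖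
      ≤ (1/(n:ℝ)) * ((n:ℝ) * ((M / (6 * Real.sqrt 3)) * vnorm (β - β'))) := by
        rw [Real.norm_eq_abs, abs_of_pos (by positivity)]
        exact mul_le_mul_of_nonneg_left hsum (by positivity)
    _ = (M / (6 * Real.sqrt 3)) * vnorm (β - β') := by field_simp
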